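/- Let λ = (λ₁,...,λₙ) be a non-increasing partition of N equipped with an involution i ↦ i' on {1,...,n} satisfying λ_i = λ_{i'} and i' ∈ {i-1, i, i+1} for all i, and such that λ_i is odd whenever i = i'. Then the number of indices r ∈ {1,...,N} with r + d_r even equals (N + #{i : λ_i odd})/2, where (d₁,...,d_N) is the sequence with λᵢ copies of i. -/

import Mathlib

/-- The invariant degree sequence associated to a partition `lam`:
`degSeq lam r` is the least `i` with `r ≤ λ₁ + ⋯ + λᵢ`; for a partition with
positive parts `λ₁ ≥ ⋯ ≥ λₙ` this lists each value `i` exactly `λᵢ` times,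
in non-decreasing order. -/
noncomputable def degSeq (lam : ℕ → ℕ) (r : ℕ) : ℕ :=
  sInf {i : ℕ | r ≤ ∑ k ∈ Finset.Icc 1 i, lam k}

def partialSum (lam : ℕ → ℕ) (i : ℕ) : ℕ := ∑ k ∈ Finset.Icc 1 i, lam k

lemma partialSum_zero (lam : ℕ → ℕ) : partialSum lam 0 = 0 := by
  simp [partialSum]

lemma partialSum_succ (lam : ℕ → ℕ) (j : ℕ) :
    partialSum lam (j+1) = partialSum lam j + lam (j+1) :=
  Finset.sum_Icc_succ_top (by omega) lam

lemma partialSum_mono (lam : ℕ → ℕ) {a b : ℕ} (h : a ≤ b) :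
    partialSum lam a ≤ partialSum lam b :=
  Finset.sum_le_sum_of_subset (Finset.Icc_subset_Icc le_rfl h)

lemma degSeq_eq_sInf (lam : ℕ → ℕ) (r : ℕ) :
    degSeq lam r = sInf {i : ℕ | r ≤ partialSum lam i} := rfl

lemma degSeq_eq (lam : ℕ → ℕ) (i r : ℕ) (hi : 1 ≤ i)
    (h1 : partialSum lam (i-1) < r) (h2 : r ≤ partialSum lam i) :
    degSeq lam r = i := by
  rw [degSeq_eq_sInf]
  have hne : {j : ℕ | r ≤ partialSum lam j}.Nonempty := ⟨i, h2⟩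
  apply le_antisymm (Nat.sInf_le (show i ∈ {j : ℕ | r ≤ partialSum lam j} from h2))
  by_contra hlt
  push_neg at hlt
  have hmem : r ≤ partialSum lam (sInf {j | r ≤ partialSum lam j}) := Nat.sInf_mem hne
  have := partialSum_mono lam (show sInf {j | r ≤ partialSum lam j} ≤ i - 1 by omega)
  omega

lemma countEven (a b i : ℕ) (hab : a ≤ b) :
    ((Finset.Ioc a b).filter fun r => Even (r + i)).card = (b + i) / 2 - (a + i) / 2 := by
  have e1 : ((Finset.Ioc a b).filter fun r => Even (r + i)).card
      = ((Finset.Ioc (a+i) (b+i)).filter fun x => 2 ∣ x).card := by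
    apply Finset.card_bij' (fun r _ => r + i) (fun x _ => x - i)
    · intro r hr
      simp only [Finset.mem_filter, Finset.mem_Ioc, Nat.even_iff] at hr ⊢
      omega
    · intro x hx
      simp only [Finset.mem_filter, Finset.mem_Ioc, Nat.even_iff] at hx ⊢
      omega
    · intro r hr; simp
    · intro x hx
      simp only [Finset.mem_filter, Finset.mem_Ioc] at hx
      omega
  have e2 : (Finset.Ioc (a+i) (b+i)).filter (fun x => 2 ∣ x)
      = ((Finset.Ioc 0 (b+i)).filter fun x => 2 ∣ x)
        \ ((Finset.Ioc 0 (a+i)).filter fun x => 2 ∣ x) := by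
    ext x
    simp only [Finset.mem_filter, Finset.mem_Ioc, Finset.mem_sdiff]
    omega
  rw [e1, e2, Finset.card_sdiff_of_subset
      (Finset.filter_subset_filter _ (Finset.Ioc_subset_Ioc_right (by omega))),
    Nat.Ioc_filter_dvd_card_eq_div, Nat.Ioc_filter_dvd_card_eq_div]

lemma keyK (n : ℕ) (lam σ : ℕ → ℕ)
    (hinv : ∀ i, σ (σ i) = i)
    (hσlam : ∀ i, lam (σ i) = lam i)
    (hσnear : ∀ i, 1 ≤ i → i ≤ n → σ i = i - 1 ∨ σ i = i ∨ σ i = i + 1)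
    (hσid : ∀ i, i = 0 ∨ n < i → σ i = i)
    (hodd : ∀ i, 1 ≤ i → i ≤ n → σ i = i → Odd (lam i)) :
    ∀ i, i ≤ n → σ (i + 1) ≠ i →
      (partialSum lam i + i) % 2 = 0 := by
  intro i
  induction i using Nat.strong_induction_on with
  | _ i IH =>
    intro hin hb
    rcases Nat.eq_zero_or_pos i with rfl | hipos
    · simp [partialSum_zero]
    obtain ⟨j, rfl⟩ : ∃ j, i = j + 1 := ⟨i - 1, by omega⟩
    have hS := partialSum_succ lam j
    rcases hσnear (j+1) (by omega) hin with h | h | h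
    · -- σ (j+1) = j : paired with previous
      have h' : σ (j+1) = j := by omega
      have hj1 : 1 ≤ j := by
        rcases Nat.eq_zero_or_pos j with hj | hj
        · exfalso
          have h0 : σ 0 = 0 := hσid 0 (Or.inl rfl)
          have h2 := hinv (j+1)
          rw [h', hj, h0] at h2
          omega
        · exact hj
      have hσj : σ j = j + 1 := by
        have h2 := hinv (j+1); rw [h'] at h2; exact h2
      obtain ⟨k, rfl⟩ : ∃ k, j = k + 1 := ⟨j - 1, by omega⟩
      have hSj := partialSum_succ lam k
      have hlam : lam (k+1) = lam (k+1+1) := by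
        have h3 := hσlam (k+1+1)
        rw [h'] at h3
        exact h3
      have hIH := IH k (by omega) (by omega) (by rw [hσj]; omega)
      omega
    · -- σ (j+1) = j+1 : fixed point, lam odd
      have hO : Odd (lam (j+1)) := hodd (j+1) (by omega) hin h
      have hIH := IH j (by omega) (by omega) (by rw [h]; omega)
      rw [Nat.odd_iff] at hO
      omega
    · have h2 := hinv (j+1)
      rw [h] at h2
      exact absurd h2 hb

lemma keyParity (n : ℕ) (lam σ : ℕ → ℕ)
    (hinv : ∀ i, σ (σ i) = i)
    (hσlam : ∀ i, lam (σ i) = lam i)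
    (hσnear : ∀ i, 1 ≤ i → i ≤ n → σ i = i - 1 ∨ σ i = i ∨ σ i = i + 1)
    (hσid : ∀ i, i = 0 ∨ n < i → σ i = i)
    (hodd : ∀ i, 1 ≤ i → i ≤ n → σ i = i → Odd (lam i)) :
    ∀ i, 1 ≤ i → i ≤ n → Odd (lam i) →
      (partialSum lam (i-1) + (i-1)) % 2 = 0 := by
  intro i hi1 hin hO
  obtain ⟨j, rfl⟩ : ∃ j, i = j + 1 := ⟨i - 1, by omega⟩
  simp only [Nat.add_sub_cancel]
  by_cases hc : σ (j+1) = j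
  · -- j+1 is the second member of an odd pair (j, j+1)
    have hj1 : 1 ≤ j := by
      rcases Nat.eq_zero_or_pos j with hj | hj
      · exfalso
        have h0 : σ 0 = 0 := hσid 0 (Or.inl rfl)
        have h2 := hinv (j+1)
        rw [hc, hj, h0] at h2
        omega
      · exact hj
    have hσj : σ j = j + 1 := by
      have h2 := hinv (j+1); rw [hc] at h2; exact h2
    obtain ⟨k, rfl⟩ : ∃ k, j = k + 1 := ⟨j - 1, by omega⟩
    have hSj := partialSum_succ lam k
    have hlam : lam (k+1) = lam (k+1+1) := by
      have h3 := hσlam (k+1+1)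
      rw [hc] at h3
      exact h3
    have hK := keyK n lam σ hinv hσlam hσnear hσid hodd k (by omega)
      (by rw [hσj]; omega)
    rw [Nat.odd_iff] at hO
    omega
  · exact keyK n lam σ hinv hσlam hσnear hσid hodd j (by omega) hc

/-- Let `λ = (λ₁ ≥ ⋯ ≥ λₙ)` be a partition of `N` with an involution `i ↦ σ i`
on `{1,…,n}` satisfying `λ_{σ i} = λᵢ` and `σ i ∈ {i-1, i, i+1}`, and such that
`λᵢ` is odd whenever `σ i = i`.  Then the number of indices `r ∈ {1,…,N}` with
`r + d_r` even equals `(N + #{i : λᵢ odd})/2`. -/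
theorem card_even_r_add_deg (N n : ℕ) (lam : ℕ → ℕ) (σ : ℕ → ℕ)
    (h0 : lam 0 = 0)
    (hpos : ∀ i, 1 ≤ i → i ≤ n → 1 ≤ lam i)
    (hsupp : ∀ i, n < i → lam i = 0)
    (hmono : ∀ i, 1 ≤ i → lam (i + 1) ≤ lam i)
    (hsum : ∑ i ∈ Finset.Icc 1 n, lam i = N)
    (hinv : ∀ i, σ (σ i) = i)
    (hσlam : ∀ i, lam (σ i) = lam i)
    (hσnear : ∀ i, 1 ≤ i → i ≤ n → σ i = i - 1 ∨ σ i = i ∨ σ i = i + 1)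
    (hσid : ∀ i, i = 0 ∨ n < i → σ i = i)
    (hodd : ∀ i, 1 ≤ i → i ≤ n → σ i = i → Odd (lam i)) :
    ((Finset.Icc 1 N).filter fun r => Even (r + degSeq lam r)).card =
      (N + ((Finset.Icc 1 n).filter fun i => Odd (lam i)).card) / 2 := by
  have hSn : partialSum lam n = N := hsum
  have hS0 : partialSum lam 0 = 0 := partialSum_zero lam
  -- cover Icc 1 N by the blocks
  have hcover : Finset.Icc 1 N
      = (Finset.Icc 1 n).biUnion
          (fun i => Finset.Ioc (partialSum lam (i-1)) (partialSum lam i)) := by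
    ext r
    simp only [Finset.mem_Icc, Finset.mem_biUnion, Finset.mem_Ioc]
    constructor
    · rintro ⟨hr1, hr2⟩
      have hrN : r ≤ partialSum lam n := by omega
      have hne : {j : ℕ | r ≤ partialSum lam j}.Nonempty := ⟨n, hrN⟩
      have hmem : r ≤ partialSum lam (sInf {j | r ≤ partialSum lam j}) :=
        Nat.sInf_mem hne
      have hd1 : 1 ≤ sInf {j | r ≤ partialSum lam j} := by
        rcases Nat.eq_zero_or_pos (sInf {j | r ≤ partialSum lam j}) with h | h
        · rw [h] at hmem; omega
        · exact h
      have hdn : sInf {j | r ≤ partialSum lam j} ≤ n :=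
        Nat.sInf_le (show n ∈ {j : ℕ | r ≤ partialSum lam j} from hrN)
      have hdlt : partialSum lam (sInf {j | r ≤ partialSum lam j} - 1) < r := by
        by_contra hcon
        push_neg at hcon
        have := Nat.sInf_le (show (sInf {j | r ≤ partialSum lam j} - 1)
          ∈ {j : ℕ | r ≤ partialSum lam j} from hcon)
        omega
      exact ⟨_, ⟨hd1, hdn⟩, hdlt, hmem⟩
    · rintro ⟨i, ⟨hi1, hin⟩, h1, h2⟩
      have := partialSum_mono lam hin
      omega
  rw [hcover, Finset.filter_biUnion, Finset.card_biUnion]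
  · -- evaluate each block's count and sum up
    have hterm : ∀ i ∈ Finset.Icc 1 n,
        ((Finset.Ioc (partialSum lam (i-1)) (partialSum lam i)).filter
          fun r => Even (r + degSeq lam r)).card
        = (lam i + if Odd (lam i) then 1 else 0) / 2 := by
      intro i hi
      simp only [Finset.mem_Icc] at hi
      have hfe : (Finset.Ioc (partialSum lam (i-1)) (partialSum lam i)).filter
            (fun r => Even (r + degSeq lam r))
          = (Finset.Ioc (partialSum lam (i-1)) (partialSum lam i)).filter
            (fun r => Even (r + i)) := by
        apply Finset.filter_congr
        intro r hr
        simp only [Finset.mem_Ioc] at hr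
        rw [degSeq_eq lam i r hi.1 hr.1 hr.2]
      rw [hfe, countEven _ _ _ (partialSum_mono lam (by omega))]
      have hSi : partialSum lam i = partialSum lam (i-1) + lam i := by
        obtain ⟨j, rfl⟩ : ∃ j, i = j+1 := ⟨i-1, by omega⟩
        simpa using partialSum_succ lam j
      by_cases hO : Odd (lam i)
      · have hpar := keyParity n lam σ hinv hσlam hσnear hσid hodd i hi.1 hi.2 hO
        rw [if_pos hO]
        rw [Nat.odd_iff] at hO
        omega
      · rw [if_neg hO]
        rw [Nat.not_odd_iff_even, Nat.even_iff] at hO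
        omega
    rw [Finset.sum_congr rfl hterm]
    have heven : ∀ i ∈ Finset.Icc 1 n,
        (lam i + if Odd (lam i) then 1 else 0) % 2 = 0 := by
      intro i _
      by_cases hO : Odd (lam i)
      · rw [if_pos hO]; rw [Nat.odd_iff] at hO; omega
      · rw [if_neg hO]; rw [Nat.not_odd_iff_even, Nat.even_iff] at hO; omega
    have h2 : 2 * ∑ i ∈ Finset.Icc 1 n, (lam i + if Odd (lam i) then 1 else 0) / 2
        = ∑ i ∈ Finset.Icc 1 n, (lam i + if Odd (lam i) then 1 else 0) := by
      rw [Finset.mul_sum]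
      refine Finset.sum_congr rfl fun i hi => ?_
      have := heven i hi
      omega
    have h3 : ∑ i ∈ Finset.Icc 1 n, (lam i + if Odd (lam i) then 1 else 0)
        = N + ((Finset.Icc 1 n).filter fun i => Odd (lam i)).card := by
      rw [Finset.sum_add_distrib, hsum, Finset.card_filter]
    omega
  · -- disjointness
    intro x hx y hy hxy
    simp only [Finset.mem_coe, Finset.mem_Icc] at hx hy
    rw [Function.onFun, Finset.disjoint_left]
    intro r hr1 hr2
    simp only [Finset.mem_filter, Finset.mem_Ioc] at hr1 hr2
    rcases lt_or_gt_of_ne hxy with h | h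
    · have := partialSum_mono lam (show x ≤ y - 1 by omega)
      omega
    · have := partialSum_mono lam (show y ≤ x - 1 by omega)
      omega
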